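/- Fixed Point Theorem: for any L-formula φ(x,y) with free variables among x and y, there exists an L_A-formula ψ(x) in which y does not occur free, such that the theory BST ∪ {pair, extract, φ-separ} semantically entails the sentence (∃y∀x(x∈y ↔ φ(x,y))) ↔ (∃y∀x(x∈y ↔ ψ(x))). -/
import Mathlib


open FirstOrder FirstOrder.Language

namespace FixedPointTheorem

/-- The language `L` with a single binary relation symbol `∈`. -/
def L0 : Language := ⟨fun _ => Empty, fun n => match n with | 2 => Unit | _ => Empty⟩

/-- The language `L_A`: `L` extended with one constant symbol `A_φ`. -/
abbrev LA : Language := L0[[Unit]]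

/-- The constant symbol `A_φ`. -/
def cA : LA.Constants := L0.con ()

/-- The membership relation symbol of `L_A`. -/
def memRel : LA.Relations 2 := Sum.inl Unit.unit

/-- `memF t₁ t₂` is the atomic formula `t₁ ∈ t₂`. -/
def memF {n : ℕ} (t₁ t₂ : LA.Term (Empty ⊕ Fin n)) : LA.BoundedFormula Empty n :=
  memRel.boundedFormula₂ t₁ t₂

/-- Inclusion of a term in context `n` into the larger context `n + k`. -/
def tl {n : ℕ} (k : ℕ) (t : LA.Term (Empty ⊕ Fin n)) : LA.Term (Empty ⊕ Fin (n + k)) :=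
  t.relabel (Sum.map id (Fin.castAdd k))

/-- `z = ⟨a,b⟩` (Kuratowski pair), as the formula
`∃p∃q(∀x(x∈p ↔ x=a) ∧ ∀x(x∈q ↔ (x=a ∨ x=b)) ∧ ∀x(x∈z ↔ (x=p ∨ x=q)))`. -/
def isPairF {n : ℕ} (z a b : LA.Term (Empty ⊕ Fin n)) : LA.BoundedFormula Empty n :=
  ∃' ∃' (
    (∀' (memF (&⟨n + 2, by omega⟩) (&⟨n, by omega⟩) ⇔
        ((&(⟨n + 2, by omega⟩ : Fin (n + 3))) =' tl 3 a))) ⊓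
    (∀' (memF (&⟨n + 2, by omega⟩) (&⟨n + 1, by omega⟩) ⇔
        (((&(⟨n + 2, by omega⟩ : Fin (n + 3))) =' tl 3 a) ⊔
         ((&(⟨n + 2, by omega⟩ : Fin (n + 3))) =' tl 3 b)))) ⊓
    (∀' (memF (&⟨n + 2, by omega⟩) (tl 3 z) ⇔
        (((&(⟨n + 2, by omega⟩ : Fin (n + 3))) =' (&⟨n, by omega⟩)) ⊔
         ((&(⟨n + 2, by omega⟩ : Fin (n + 3))) =' (&⟨n + 1, by omega⟩))))))

/-- Extensionality: `∀y∀z(∀x(x∈y ↔ x∈z) → y=z)`. -/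
def extAx : LA.Sentence :=
  ∀' ∀' ((∀' (memF (&2) (&0) ⇔ memF (&2) (&1))) ⟹ ((&0) =' (&1)))

/-- Basic set theory: the theory whose only axiom is extensionality. -/
def BST : LA.Theory := {extAx}

/-- Pairing: `∀a∀b∃y∀x(x∈y ↔ (x=a ∨ x=b))`. -/
def pairAx : LA.Sentence :=
  ∀' ∀' ∃' ∀' (memF (&3) (&2) ⇔ (((&3) =' (&0)) ⊔ ((&3) =' (&1))))

/-- Extracting: `∀a∃y∀x(x∈y ↔ ∃z(z=⟨a,x⟩ ∧ z∈a))`. -/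
def extractAx : LA.Sentence :=
  ∀' ∃' ∀' (memF (&2) (&1) ⇔ ∃' (isPairF (&3) (&0) (&2) ⊓ memF (&3) (&0)))

/-- `u = v[v]`, i.e. `∀t(t∈u ↔ ∃z(z=⟨v,t⟩ ∧ z∈v))`, here with `v = &1`, `u = &3`
in context `4` (as used in `φ-separ`). -/
def uEqExtractF : LA.BoundedFormula Empty 4 :=
  ∀' (memF (&4) (&3) ⇔ ∃' (isPairF (&5) (&1) (&4) ⊓ memF (&5) (&1)))

/-- The image in `L_A` of an `L`-formula `φ(x,y)` (free variables `0 = x`, `1 = y`). -/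
def phiLA (φ : L0.Formula (Fin 2)) : LA.Formula (Fin 2) :=
  (L0.lhomWithConstants Unit).onFormula φ

/-- `φ-separ`: the axiom `∀x(x∈A_φ ↔ ∃v∃w(x=⟨v,w⟩ ∧ φ(w,v[v])))`, where `φ(w,v[v])`
abbreviates `∃u(u=v[v] ∧ φ(w,u))`. -/
def separAx (φ : L0.Formula (Fin 2)) : LA.Sentence :=
  ∀' (memF (&0) (Constants.term cA) ⇔
    ∃' ∃' (isPairF (&0) (&1) (&2) ⊓
      ∃' (uEqExtractF ⊓
        BoundedFormula.relabel (fun i => Sum.inr (if i = 0 then (2 : Fin 4) else 3)) (phiLA φ))))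


section Aux
set_option linter.unusedSectionVars false
variable {M : Type*} [LA.Structure M]

/-- Membership in a structure `M`. -/
def E (a b : M) : Prop := Structure.RelMap memRel ![a, b]

/-- `z = ⟨a,b⟩` semantically, in `M`. -/
def IsPairM (z a b : M) : Prop :=
  ∃ p q : M, (∀ x, E x p ↔ x = a) ∧ (∀ x, E x q ↔ x = a ∨ x = b) ∧
    (∀ x, E x z ↔ x = p ∨ x = q)

/-- Realization of `φ` with `x := a`, `y := b`. -/
def Pphi (φ : L0.Formula (Fin 2)) (a b : M) : Prop :=
  BoundedFormula.Realize (phiLA φ) (fun i : Fin 2 => if i = 0 then a else b)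
    (default : Fin 0 → M)

@[simp] lemma snoc3_top {n : ℕ} (xs : Fin n → M) (p q x : M) (h : n + 2 < n + 3) :
    (Fin.snoc (Fin.snoc (Fin.snoc xs p) q) x : Fin (n + 3) → M) ⟨n + 2, h⟩ = x := by
  have : (⟨n + 2, h⟩ : Fin (n + 3)) = Fin.last (n + 2) := rfl
  rw [this, Fin.snoc_last]

@[simp] lemma snoc3_mid {n : ℕ} (xs : Fin n → M) (p q x : M) (h : n + 1 < n + 3) :
    (Fin.snoc (Fin.snoc (Fin.snoc xs p) q) x : Fin (n + 3) → M) ⟨n + 1, h⟩ = q := by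
  have : (⟨n + 1, h⟩ : Fin (n + 3)) = Fin.castSucc (Fin.last (n + 1)) := rfl
  rw [this, Fin.snoc_castSucc, Fin.snoc_last]

@[simp] lemma snoc3_lo {n : ℕ} (xs : Fin n → M) (p q x : M) (h : n < n + 3) :
    (Fin.snoc (Fin.snoc (Fin.snoc xs p) q) x : Fin (n + 3) → M) ⟨n, h⟩ = p := by
  have : (⟨n, h⟩ : Fin (n + 3)) = Fin.castSucc (Fin.castSucc (Fin.last n)) := rfl
  rw [this, Fin.snoc_castSucc, Fin.snoc_castSucc, Fin.snoc_last]

@[simp] lemma snoc3_castAdd {n : ℕ} (xs : Fin n → M) (p q x : M) :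
    (Fin.snoc (Fin.snoc (Fin.snoc xs p) q) x : Fin (n + 3) → M) ∘ Fin.castAdd 3 = xs := by
  funext i
  have : (Fin.castAdd 3 i : Fin (n + 3)) = Fin.castSucc (Fin.castSucc (Fin.castSucc i)) := rfl
  simp [Function.comp, this]

@[simp] lemma snocE_1_0 (f : Fin 0 → M) (a1 : M) :
    (Fin.snoc f a1 : Fin 1 → M) 0 = a1 := rfl

@[simp] lemma snocE_2_0 (f : Fin 0 → M) (a1 a2 : M) :
    (Fin.snoc (Fin.snoc f a1) a2 : Fin 2 → M) 0 = a1 := rfl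

@[simp] lemma snocE_2_1 (f : Fin 0 → M) (a1 a2 : M) :
    (Fin.snoc (Fin.snoc f a1) a2 : Fin 2 → M) 1 = a2 := rfl

@[simp] lemma snocE_3_0 (f : Fin 0 → M) (a1 a2 a3 : M) :
    (Fin.snoc (Fin.snoc (Fin.snoc f a1) a2) a3 : Fin 3 → M) 0 = a1 := rfl

@[simp] lemma snocE_3_1 (f : Fin 0 → M) (a1 a2 a3 : M) :
    (Fin.snoc (Fin.snoc (Fin.snoc f a1) a2) a3 : Fin 3 → M) 1 = a2 := rfl

@[simp] lemma snocE_3_2 (f : Fin 0 → M) (a1 a2 a3 : M) :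
    (Fin.snoc (Fin.snoc (Fin.snoc f a1) a2) a3 : Fin 3 → M) 2 = a3 := rfl

@[simp] lemma snocE_4_0 (f : Fin 0 → M) (a1 a2 a3 a4 : M) :
    (Fin.snoc (Fin.snoc (Fin.snoc (Fin.snoc f a1) a2) a3) a4 : Fin 4 → M) 0 = a1 := rfl

@[simp] lemma snocE_4_1 (f : Fin 0 → M) (a1 a2 a3 a4 : M) :
    (Fin.snoc (Fin.snoc (Fin.snoc (Fin.snoc f a1) a2) a3) a4 : Fin 4 → M) 1 = a2 := rfl

@[simp] lemma snocE_4_2 (f : Fin 0 → M) (a1 a2 a3 a4 : M) :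
    (Fin.snoc (Fin.snoc (Fin.snoc (Fin.snoc f a1) a2) a3) a4 : Fin 4 → M) 2 = a3 := rfl

@[simp] lemma snocE_4_3 (f : Fin 0 → M) (a1 a2 a3 a4 : M) :
    (Fin.snoc (Fin.snoc (Fin.snoc (Fin.snoc f a1) a2) a3) a4 : Fin 4 → M) 3 = a4 := rfl

@[simp] lemma snocE_5_0 (f : Fin 0 → M) (a1 a2 a3 a4 a5 : M) :
    (Fin.snoc (Fin.snoc (Fin.snoc (Fin.snoc (Fin.snoc f a1) a2) a3) a4) a5 : Fin 5 → M) 0 = a1 := rfl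

@[simp] lemma snocE_5_1 (f : Fin 0 → M) (a1 a2 a3 a4 a5 : M) :
    (Fin.snoc (Fin.snoc (Fin.snoc (Fin.snoc (Fin.snoc f a1) a2) a3) a4) a5 : Fin 5 → M) 1 = a2 := rfl

@[simp] lemma snocE_5_2 (f : Fin 0 → M) (a1 a2 a3 a4 a5 : M) :
    (Fin.snoc (Fin.snoc (Fin.snoc (Fin.snoc (Fin.snoc f a1) a2) a3) a4) a5 : Fin 5 → M) 2 = a3 := rfl

@[simp] lemma snocE_5_3 (f : Fin 0 → M) (a1 a2 a3 a4 a5 : M) :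
    (Fin.snoc (Fin.snoc (Fin.snoc (Fin.snoc (Fin.snoc f a1) a2) a3) a4) a5 : Fin 5 → M) 3 = a4 := rfl

@[simp] lemma snocE_5_4 (f : Fin 0 → M) (a1 a2 a3 a4 a5 : M) :
    (Fin.snoc (Fin.snoc (Fin.snoc (Fin.snoc (Fin.snoc f a1) a2) a3) a4) a5 : Fin 5 → M) 4 = a5 := rfl

@[simp] lemma snocE_6_0 (f : Fin 0 → M) (a1 a2 a3 a4 a5 a6 : M) :
    (Fin.snoc (Fin.snoc (Fin.snoc (Fin.snoc (Fin.snoc (Fin.snoc f a1) a2) a3) a4) a5) a6 : Fin 6 → M) 0 = a1 := rfl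

@[simp] lemma snocE_6_1 (f : Fin 0 → M) (a1 a2 a3 a4 a5 a6 : M) :
    (Fin.snoc (Fin.snoc (Fin.snoc (Fin.snoc (Fin.snoc (Fin.snoc f a1) a2) a3) a4) a5) a6 : Fin 6 → M) 1 = a2 := rfl

@[simp] lemma snocE_6_2 (f : Fin 0 → M) (a1 a2 a3 a4 a5 a6 : M) :
    (Fin.snoc (Fin.snoc (Fin.snoc (Fin.snoc (Fin.snoc (Fin.snoc f a1) a2) a3) a4) a5) a6 : Fin 6 → M) 2 = a3 := rfl

@[simp] lemma snocE_6_3 (f : Fin 0 → M) (a1 a2 a3 a4 a5 a6 : M) :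
    (Fin.snoc (Fin.snoc (Fin.snoc (Fin.snoc (Fin.snoc (Fin.snoc f a1) a2) a3) a4) a5) a6 : Fin 6 → M) 3 = a4 := rfl

@[simp] lemma snocE_6_4 (f : Fin 0 → M) (a1 a2 a3 a4 a5 a6 : M) :
    (Fin.snoc (Fin.snoc (Fin.snoc (Fin.snoc (Fin.snoc (Fin.snoc f a1) a2) a3) a4) a5) a6 : Fin 6 → M) 4 = a5 := rfl

@[simp] lemma snocE_6_5 (f : Fin 0 → M) (a1 a2 a3 a4 a5 a6 : M) :
    (Fin.snoc (Fin.snoc (Fin.snoc (Fin.snoc (Fin.snoc (Fin.snoc f a1) a2) a3) a4) a5) a6 : Fin 6 → M) 5 = a6 := rfl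

@[simp] lemma realize_memF {n : ℕ} {t₁ t₂ : LA.Term (Empty ⊕ Fin n)} {v : Empty → M}
    {xs : Fin n → M} :
    (memF t₁ t₂).Realize v xs ↔ E (t₁.realize (Sum.elim v xs)) (t₂.realize (Sum.elim v xs)) := by
  simp [memF, E]

@[simp] lemma realize_isPairF {n : ℕ} {z a b : LA.Term (Empty ⊕ Fin n)} {v : Empty → M}
    {xs : Fin n → M} :
    (isPairF z a b).Realize v xs ↔
      IsPairM (z.realize (Sum.elim v xs)) (a.realize (Sum.elim v xs))
        (b.realize (Sum.elim v xs)) := by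
  simp only [isPairF, IsPairM, BoundedFormula.realize_ex, BoundedFormula.realize_inf,
    BoundedFormula.realize_all, BoundedFormula.realize_iff, BoundedFormula.realize_sup,
    BoundedFormula.realize_bdEqual, realize_memF, tl, Term.realize_relabel, Term.realize_var,
    Sum.elim_inr, Sum.elim_inl, Function.comp_apply, Sum.elim_comp_map, Function.comp_id,
    snoc3_top, snoc3_mid, snoc3_lo, snoc3_castAdd]
  tauto

lemma realize_relabel_phi4 (φ : L0.Formula (Fin 2)) (v : Empty → M) (xs : Fin 4 → M) :
    (BoundedFormula.relabel (fun i => Sum.inr (if i = 0 then (2 : Fin 4) else 3))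
      (phiLA φ)).Realize v xs ↔ Pphi φ (xs 2) (xs 3) := by
  rw [BoundedFormula.realize_relabel]
  have h1 : (Sum.elim v (xs ∘ Fin.castAdd 0) ∘
      fun i : Fin 2 => Sum.inr (if i = 0 then (2 : Fin 4) else 3))
      = (fun i : Fin 2 => if i = 0 then xs 2 else xs 3) := by
    funext i
    by_cases h : i = 0 <;> simp only [h, if_pos, if_true, if_neg, if_false,
      Function.comp_apply, Sum.elim_inr] <;> rfl
  rw [h1, Subsingleton.elim (xs ∘ Fin.natAdd 4) (default : Fin 0 → M)]
  exact Iff.rfl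

lemma realize_relabel_phi2 (φ : L0.Formula (Fin 2)) (v : Empty → M) (xs : Fin 2 → M) :
    (BoundedFormula.relabel (fun i => Sum.inr (if i = 0 then (1 : Fin 2) else 0))
      (phiLA φ)).Realize v xs ↔ Pphi φ (xs 1) (xs 0) := by
  rw [BoundedFormula.realize_relabel]
  have h1 : (Sum.elim v (xs ∘ Fin.castAdd 0) ∘
      fun i : Fin 2 => Sum.inr (if i = 0 then (1 : Fin 2) else 0))
      = (fun i : Fin 2 => if i = 0 then xs 1 else xs 0) := by
    funext i
    by_cases h : i = 0 <;> simp only [h, if_pos, if_true, if_neg, if_false,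
      Function.comp_apply, Sum.elim_inr] <;> rfl
  rw [h1, Subsingleton.elim (xs ∘ Fin.natAdd 2) (default : Fin 0 → M)]
  exact Iff.rfl

lemma realize_liftAt_psi (v : Empty → M) (xs : Fin 2 → M) :
    ((memF (&0) (Constants.term cA) : LA.BoundedFormula Empty 1).liftAt 1 0).Realize v xs ↔
      E (xs 1) (cA : M) := by
  rw [BoundedFormula.realize_liftAt (by norm_num)]
  simp only [realize_memF, Term.realize_var, Term.realize_constants, Function.comp_apply,
    Sum.elim_inr]
  have h : (if ((0 : Fin 1) : ℕ) < 0 then Fin.castAdd 1 (0 : Fin 1) else Fin.addNat (0 : Fin 1) 1)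
      = (1 : Fin 2) := rfl
  rw [h]

/-- Kuratowski pairs are injective (uses only the membership characterizations). -/
lemma pair_injective {z a b a' b' : M} (h1 : IsPairM z a b) (h2 : IsPairM z a' b') :
    a = a' ∧ b = b' := by
  obtain ⟨p, q, hp, hq, hz⟩ := h1
  obtain ⟨p', q', hp', hq', hz'⟩ := h2
  have haa : a = a' := by
    rcases (hz' p).1 ((hz p).2 (Or.inl rfl)) with h | h
    · have hap := (hp a).2 rfl
      rw [h] at hap
      exact (hp' a).1 hap
    · have key : ∀ x : M, x = a ↔ x = a' ∨ x = b' := fun x => by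
        rw [← hp x, h]; exact hq' x
      exact ((key a').2 (Or.inl rfl)).symm
  refine ⟨haa, ?_⟩
  rcases (hz' q).1 ((hz q).2 (Or.inr rfl)) with h | h
  · have key1 : ∀ x : M, x = a ∨ x = b ↔ x = a' := fun x => by
      rw [← hq x, h]; exact hp' x
    have hb : b = a' := (key1 b).1 (Or.inr rfl)
    rcases (hz q').1 ((hz' q').2 (Or.inr rfl)) with h2 | h2
    · have key2 : ∀ x : M, x = a' ∨ x = b' ↔ x = a := fun x => by
        rw [← hq' x, h2]; exact hp x
      have hb' : b' = a := (key2 b').1 (Or.inr rfl)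
      rw [hb, hb', ← haa]
    · have key3 : ∀ x : M, x = a' ∨ x = b' ↔ x = a ∨ x = b := fun x => by
        rw [← hq' x, h2]; exact hq x
      rcases (key3 b').1 (Or.inr rfl) with hb' | hb'
      · rw [hb, hb', ← haa]
      · exact hb'.symm
  · have key : ∀ x : M, x = a ∨ x = b ↔ x = a' ∨ x = b' := fun x => by
      rw [← hq x, h]; exact hq' x
    rcases (key b).1 (Or.inr rfl) with hb | hb
    · rcases (key b').2 (Or.inr rfl) with hb' | hb'
      · rw [hb, ← haa, hb']
      · exact hb'.symm
    · exact hb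

/-- The semantic core of the fixed point theorem. -/
lemma core (hext : ∀ y z : M, (∀ x, E x y ↔ E x z) → y = z)
    (hpair : ∀ a b : M, ∃ y, ∀ x, E x y ↔ x = a ∨ x = b)
    (P : M → M → Prop) (A Y : M)
    (hY : ∀ x, E x Y ↔ ∃ z, IsPairM z A x ∧ E z A)
    (hsep : ∀ x, E x A ↔ ∃ v w, IsPairM x v w ∧ ∃ u,
      (∀ t, E t u ↔ ∃ z, IsPairM z v t ∧ E z v) ∧ P w u) :
    ∀ x, E x Y ↔ P x Y := by
  intro x
  constructor
  · intro hx
    obtain ⟨z, hzp, hzA⟩ := (hY x).1 hx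
    obtain ⟨v', w', hvw, u, hu, hP⟩ := (hsep z).1 hzA
    obtain ⟨hv, hw⟩ := pair_injective hvw hzp
    subst hv
    subst hw
    have huY : u = Y := hext u Y fun t => (hu t).trans (hY t).symm
    rwa [huY] at hP
  · intro hP
    obtain ⟨p, hp⟩ := hpair A A
    obtain ⟨q, hq⟩ := hpair A x
    obtain ⟨z, hz⟩ := hpair p q
    have hzp : IsPairM z A x := ⟨p, q, fun t => (hp t).trans or_self_iff, hq, hz⟩
    have hzA : E z A := (hsep z).2 ⟨A, x, hzp, Y, fun t => hY t, hP⟩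
    exact (hY x).2 ⟨z, hzp, hzA⟩

lemma clean_ext (h : M ⊨ extAx) : ∀ y z : M, (∀ x, E x y ↔ E x z) → y = z := by
  simp only [extAx, Sentence.Realize, Formula.Realize, BoundedFormula.realize_all,
    BoundedFormula.realize_imp, BoundedFormula.realize_iff, BoundedFormula.realize_bdEqual,
    realize_memF, Term.realize_var, Function.comp_apply, Sum.elim_inr,
    snocE_1_0, snocE_2_0, snocE_2_1, snocE_3_0, snocE_3_1, snocE_3_2] at h
  exact h

lemma clean_pair (h : M ⊨ pairAx) : ∀ a b : M, ∃ y, ∀ x, E x y ↔ x = a ∨ x = b := by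
  simp only [pairAx, Sentence.Realize, Formula.Realize, BoundedFormula.realize_all,
    BoundedFormula.realize_ex, BoundedFormula.realize_iff, BoundedFormula.realize_sup,
    BoundedFormula.realize_bdEqual, realize_memF, Term.realize_var, Function.comp_apply,
    Sum.elim_inr, snocE_4_0, snocE_4_1, snocE_4_2, snocE_4_3] at h
  exact h

lemma clean_extract (h : M ⊨ extractAx) :
    ∀ a : M, ∃ y, ∀ x, E x y ↔ ∃ z, IsPairM z a x ∧ E z a := by
  simp only [extractAx, Sentence.Realize, Formula.Realize, BoundedFormula.realize_all,
    BoundedFormula.realize_ex, BoundedFormula.realize_iff, BoundedFormula.realize_inf,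
    realize_memF, realize_isPairF, Term.realize_var, Function.comp_apply, Sum.elim_inr,
    snocE_3_0, snocE_3_1, snocE_3_2, snocE_4_0, snocE_4_1, snocE_4_2, snocE_4_3] at h
  exact h

lemma clean_separ (φ : L0.Formula (Fin 2)) (h : M ⊨ separAx φ) :
    ∀ x : M, E x (cA : M) ↔ ∃ v w, IsPairM x v w ∧ ∃ u,
      (∀ t, E t u ↔ ∃ z, IsPairM z v t ∧ E z v) ∧ Pphi φ w u := by
  simp only [separAx, uEqExtractF, Sentence.Realize, Formula.Realize,
    BoundedFormula.realize_all, BoundedFormula.realize_ex, BoundedFormula.realize_iff,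
    BoundedFormula.realize_inf, realize_memF, realize_isPairF, realize_relabel_phi4,
    Term.realize_var, Term.realize_constants, Function.comp_apply, Sum.elim_inr,
    snocE_1_0, snocE_2_0, snocE_2_1, snocE_3_0, snocE_3_1, snocE_3_2,
    snocE_4_0, snocE_4_1, snocE_4_2, snocE_4_3,
    snocE_5_0, snocE_5_1, snocE_5_2, snocE_5_3, snocE_5_4,
    snocE_6_0, snocE_6_1, snocE_6_2, snocE_6_3, snocE_6_4, snocE_6_5] at h
  exact h

end Aux

/-- Fixed Point Theorem: for any `L`-formula `φ(x,y)` there is an `L_A`-formula `ψ(x)`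
in which `y` does not occur free such that `BST ∪ {pair, extract, φ-separ}` semantically
entails `(∃y∀x(x∈y ↔ φ(x,y))) ↔ (∃y∀x(x∈y ↔ ψ(x)))`. -/
theorem fixed_point (φ : L0.Formula (Fin 2)) :
    ∃ ψ : LA.BoundedFormula Empty 1,
      (BST ∪ {pairAx, extractAx, separAx φ}) ⊨ᵇ
        (((∃' ∀' (memF (&1) (&0) ⇔
            BoundedFormula.relabel (fun i => Sum.inr (if i = 0 then (1 : Fin 2) else 0)) (phiLA φ))) ⇔
          (∃' ∀' (memF (&1) (&0) ⇔ ψ.liftAt 1 0))) : LA.Sentence) := by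
  refine ⟨memF (&0) (Constants.term cA), ?_⟩
  intro M v xs
  have hext := clean_ext (M := M)
    (Theory.realize_sentence_of_mem (BST ∪ {pairAx, extractAx, separAx φ}) (by simp [BST]))
  have hpair := clean_pair (M := M)
    (Theory.realize_sentence_of_mem (BST ∪ {pairAx, extractAx, separAx φ}) (by simp))
  have hextract := clean_extract (M := M)
    (Theory.realize_sentence_of_mem (BST ∪ {pairAx, extractAx, separAx φ}) (by simp))
  have hsep := clean_separ (M := M) φ
    (Theory.realize_sentence_of_mem (BST ∪ {pairAx, extractAx, separAx φ}) (by simp))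
  obtain ⟨Y, hY⟩ := hextract (cA : M)
  have hfix := core hext hpair (Pphi φ) (cA : M) Y hY hsep
  simp only [BoundedFormula.realize_iff, BoundedFormula.realize_ex, BoundedFormula.realize_all,
    realize_memF, realize_relabel_phi2, realize_liftAt_psi, Term.realize_var,
    Function.comp_apply, Sum.elim_inr, snocE_1_0, snocE_2_0, snocE_2_1]
  constructor
  · intro _
    exact ⟨(cA : M), fun x =>
      (realize_liftAt_psi v (Fin.snoc (Fin.snoc xs ((cA : (M : Type _)))) x)).symm⟩
  · intro _
    exact ⟨Y, hfix⟩

end FixedPointTheorem
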